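/- Let N ≥ 1, 0 < λ ≤ Λ, d > 0 and b ∈ ℝ. There exists δ > 0, depending only on λ, Λ, N, d and b, such that for every bounded open set Ω ⊆ ℝ^N with diam(Ω) ≤ d and Lebesgue measure meas(Ω) < δ, every function c : Ω → ℝ with c(x) ≤ b for all x ∈ Ω, and every u ∈ C²(Ω) ∩ C(Ω̄) satisfying M⁻_{λ,Λ}(D²u)(x) + c(x)·u(x) ≤ 0 for all x ∈ Ω and u ≥ 0 on ∂Ω, one has u ≥ 0 in Ω. -/

import Mathlib

noncomputable def puccPlus {n : ℕ} (lam Lam : ℝ) (A : Matrix (Fin n) (Fin n) ℝ) : ℝ :=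
  if hA : A.IsHermitian then
    ∑ i, (if 0 < hA.eigenvalues i then Lam * hA.eigenvalues i else lam * hA.eigenvalues i)
  else 0

noncomputable def puccMinus {n : ℕ} (lam Lam : ℝ) (A : Matrix (Fin n) (Fin n) ℝ) : ℝ :=
  if hA : A.IsHermitian then
    ∑ i, (if 0 < hA.eigenvalues i then lam * hA.eigenvalues i else Lam * hA.eigenvalues i)
  else 0

noncomputable def hessianMat {N : ℕ} (u : EuclideanSpace ℝ (Fin N) → ℝ)
    (x : EuclideanSpace ℝ (Fin N)) : Matrix (Fin N) (Fin N) ℝ :=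
  fun i j => iteratedFDeriv ℝ 2 u x ![EuclideanSpace.single i (1:ℝ), EuclideanSpace.single j 1]

def C2Cont {N : ℕ} (Ω : Set (EuclideanSpace ℝ (Fin N))) (u : EuclideanSpace ℝ (Fin N) → ℝ) : Prop :=
  ContDiffOn ℝ 2 u Ω ∧ ContinuousOn u (closure Ω)

def IsRegularBoundedDomain {N : ℕ} (Ω : Set (EuclideanSpace ℝ (Fin N))) : Prop :=
  IsOpen Ω ∧ IsConnected Ω ∧ Bornology.IsBounded Ω ∧
    ∃ ρ : ℝ, 0 < ρ ∧ ∀ x ∈ frontier Ω,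
      (∃ y, Metric.ball y ρ ⊆ Ω ∧ dist x y = ρ) ∧
      (∃ y, Metric.ball y ρ ⊆ (closure Ω)ᶜ ∧ dist x y = ρ)

def PosEigenpair {N : ℕ} (lam Lam : ℝ) (Ω : Set (EuclideanSpace ℝ (Fin N)))
    (μ : ℝ) (φ : EuclideanSpace ℝ (Fin N) → ℝ) : Prop :=
  C2Cont Ω φ ∧ (∀ x ∈ Ω, 0 < φ x) ∧ (∀ x ∈ frontier Ω, φ x = 0) ∧
    ∀ x ∈ Ω, -puccPlus lam Lam (hessianMat φ x) = μ * φ x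

def NegEigenpair {N : ℕ} (lam Lam : ℝ) (Ω : Set (EuclideanSpace ℝ (Fin N)))
    (μ : ℝ) (φ : EuclideanSpace ℝ (Fin N) → ℝ) : Prop :=
  C2Cont Ω φ ∧ (∀ x ∈ Ω, φ x < 0) ∧ (∀ x ∈ frontier Ω, φ x = 0) ∧
    ∀ x ∈ Ω, -puccPlus lam Lam (hessianMat φ x) = μ * φ x

def IsEigenvalueP {N : ℕ} (lam Lam : ℝ) (Ω : Set (EuclideanSpace ℝ (Fin N))) (μ : ℝ) : Prop :=
  ∃ u, C2Cont Ω u ∧ (∃ x ∈ Ω, u x ≠ 0) ∧ (∀ x ∈ frontier Ω, u x = 0) ∧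
    ∀ x ∈ Ω, -puccPlus lam Lam (hessianMat u x) = μ * u x

/- ## Auxiliary lemmas -/

open Filter Set Matrix MeasureTheory

section Aux

lemma aux_1d {g g' : ℝ → ℝ} {L : ℝ}
    (hE : ∀ᶠ t in nhds (0:ℝ), HasDerivAt g (g' t) t)
    (hL : HasDerivAt g' L 0) (hmin : IsLocalMin g 0) : 0 ≤ L := by
  by_contra hneg
  push_neg at hneg
  have hg'0 : g' 0 = 0 := by
    have h0 : HasDerivAt g (g' 0) 0 := hE.self_of_nhds
    have := hmin.deriv_eq_zero
    rwa [h0.deriv] at this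
  have hslope := hasDerivAt_iff_tendsto_slope.1 hL
  have hev : ∀ᶠ t in nhdsWithin (0:ℝ) {(0:ℝ)}ᶜ, slope g' 0 t < 0 :=
    hslope.eventually_lt_const hneg
  rw [eventually_nhdsWithin_iff] at hev
  have hall : ∀ᶠ t in nhds (0:ℝ),
      (t ∈ ({(0:ℝ)}ᶜ : Set ℝ) → slope g' 0 t < 0) ∧ HasDerivAt g (g' t) t ∧ g 0 ≤ g t :=
    hev.and (hE.and hmin)
  rcases Metric.eventually_nhds_iff.1 hall with ⟨ε, hε, hball⟩
  have key : ∀ t : ℝ, 0 < t → t < ε → g' t < 0 := by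
    intro t ht htε
    have hd : dist t (0:ℝ) < ε := by
      simp [Real.dist_eq, abs_of_pos ht, htε]
    have := ((hball hd).1 (by simp [ne_of_gt ht]))
    rw [slope_def_field] at this
    have h2 : (g' t - g' 0) / (t - 0) < 0 := this
    rw [hg'0, sub_zero, sub_zero] at h2
    by_contra hge
    push_neg at hge
    exact absurd (div_nonneg hge ht.le) (not_le.2 h2)
  have hanti : StrictAntiOn g (Icc 0 (ε/2)) := by
    apply strictAntiOn_of_deriv_neg (convex_Icc _ _)
    · intro t ht
      have hd : dist t (0:ℝ) < ε := by
        rw [Real.dist_eq, sub_zero, abs_of_nonneg ht.1]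
        linarith [ht.2]
      exact ((hball hd).2.1).continuousAt.continuousWithinAt
    · intro t ht
      rw [interior_Icc] at ht
      have hd : dist t (0:ℝ) < ε := by
        rw [Real.dist_eq, sub_zero, abs_of_pos ht.1]
        linarith [ht.2]
      rw [((hball hd).2.1).deriv]
      exact key t ht.1 (by linarith [ht.2])
  have h1 : g (ε/2) < g 0 :=
    hanti (by constructor <;> [exact le_refl 0; positivity]) ⟨by positivity, le_refl _⟩ (by positivity)
  have h2 : g 0 ≤ g (ε/2) := by
    have hd : dist (ε/2) (0:ℝ) < ε := by
      rw [Real.dist_eq, sub_zero, abs_of_pos (by positivity)]; linarith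
    exact (hball hd).2.2
  linarith

lemma aux_dir {E : Type*} [NormedAddCommGroup E] [NormedSpace ℝ E]
    {u : E → ℝ} {Ω : Set E} (hΩ : IsOpen Ω) (hu : ContDiffOn ℝ 2 u Ω)
    {x : E} (hx : x ∈ Ω) (hmin : IsLocalMin u x) (v : E) :
    0 ≤ fderiv ℝ (fderiv ℝ u) x v v := by
  have hdiff : ∀ y ∈ Ω, HasFDerivAt u (fderiv ℝ u y) y := fun y hy =>
    ((hu.contDiffAt (hΩ.mem_nhds hy)).differentiableAt (by norm_num)).hasFDerivAt
  have hu1 : ContDiffOn ℝ 1 (fderiv ℝ u) Ω := hu.fderiv_of_isOpen hΩ (by norm_num)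
  have hA : HasFDerivAt (fderiv ℝ u) (fderiv ℝ (fderiv ℝ u) x) x :=
    ((hu1.contDiffAt (hΩ.mem_nhds hx)).differentiableAt (by norm_num)).hasFDerivAt
  set c : ℝ → E := fun t => x + t • v with hc
  have hcd : ∀ t : ℝ, HasDerivAt c v t := by
    intro t
    have h1 : HasDerivAt (fun t : ℝ => t • v) ((1:ℝ) • v) t := (hasDerivAt_id t).smul_const v
    have h2 : HasDerivAt (fun t : ℝ => t • v) v t := by simpa using h1
    exact h2.const_add x
  have hcont : Continuous c := by fun_prop
  have hc0 : c 0 = x := by simp [hc]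
  have hevΩ : ∀ᶠ t in nhds (0:ℝ), c t ∈ Ω := by
    have : Tendsto c (nhds 0) (nhds x) := by
      rw [← hc0]; exact hcont.continuousAt
    exact this.eventually (hΩ.eventually_mem hx)
  set g : ℝ → ℝ := fun t => u (c t)
  set g' : ℝ → ℝ := fun t => fderiv ℝ u (c t) v
  have hE : ∀ᶠ t in nhds (0:ℝ), HasDerivAt g (g' t) t := by
    filter_upwards [hevΩ] with t ht
    exact (hdiff _ ht).comp_hasDerivAt t (hcd t)
  have hinner : HasDerivAt (fun t => fderiv ℝ u (c t)) (fderiv ℝ (fderiv ℝ u) x v) 0 := by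
    have hA' : HasFDerivAt (fderiv ℝ u) (fderiv ℝ (fderiv ℝ u) x) (c 0) := by rwa [hc0]
    have h2 := hA'.comp_hasDerivAt 0 (hcd 0)
    exact h2
  have hL : HasDerivAt g' (fderiv ℝ (fderiv ℝ u) x v v) 0 := by
    have := (ContinuousLinearMap.apply ℝ ℝ v).hasFDerivAt.comp_hasDerivAt 0 hinner
    exact this
  have hming : IsLocalMin g 0 := by
    have : Tendsto c (nhds 0) (nhds x) := by rw [← hc0]; exact hcont.continuousAt
    have h2 := this.eventually hmin
    filter_upwards [h2] with t ht
    simpa [g, hc0] using ht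
  exact aux_1d hE hL hming

variable {N : ℕ}

noncomputable abbrev ee (i : Fin N) : EuclideanSpace ℝ (Fin N) := EuclideanSpace.single i (1:ℝ)

lemma hessianMat_eq (u : EuclideanSpace ℝ (Fin N) → ℝ) (x : EuclideanSpace ℝ (Fin N)) (i j : Fin N) :
    hessianMat u x i j = fderiv ℝ (fderiv ℝ u) x (ee i) (ee j) := by
  rw [hessianMat, iteratedFDeriv_two_apply]
  simp

lemma quad_expand (A : EuclideanSpace ℝ (Fin N) →L[ℝ] EuclideanSpace ℝ (Fin N) →L[ℝ] ℝ)
    (v : Fin N → ℝ) :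
    A (∑ i, v i • ee i) (∑ j, v j • ee j) = ∑ i, ∑ j, v i * v j * A (ee i) (ee j) := by
  simp only [map_sum, _root_.map_smul, ContinuousLinearMap.coe_sum', Finset.sum_apply,
    ContinuousLinearMap.smul_apply, smul_eq_mul]
  rw [Finset.sum_comm]
  refine Finset.sum_congr rfl fun i _ => ?_
  rw [Finset.mul_sum]
  exact Finset.sum_congr rfl fun j _ => by ring

lemma quad_dot (A : EuclideanSpace ℝ (Fin N) →L[ℝ] EuclideanSpace ℝ (Fin N) →L[ℝ] ℝ)
    (v : Fin N → ℝ) :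
    star v ⬝ᵥ ((Matrix.of fun i j => A (ee i) (ee j)) *ᵥ v)
      = A (∑ i, v i • ee i) (∑ j, v j • ee j) := by
  rw [quad_expand]
  simp only [dotProduct, Matrix.mulVec, star_trivial, dotProduct, Matrix.of_apply]
  refine Finset.sum_congr rfl fun i _ => ?_
  rw [Finset.mul_sum]
  refine Finset.sum_congr rfl fun j _ => ?_
  ring

lemma herm_of_symm (H : Matrix (Fin N) (Fin N) ℝ) (h : ∀ i j, H i j = H j i) :
    H.IsHermitian := by
  ext i j
  simp [Matrix.conjTranspose_apply, h i j]

noncomputable def Phi (N : ℕ) : (EuclideanSpace ℝ (Fin N) →L[ℝ] ℝ) →L[ℝ] EuclideanSpace ℝ (Fin N) :=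
  (EuclideanSpace.equiv (Fin N) ℝ).symm.toContinuousLinearMap.comp
    (ContinuousLinearMap.pi fun i => ContinuousLinearMap.apply ℝ ℝ (ee i))

lemma Phi_apply_coord (T : EuclideanSpace ℝ (Fin N) →L[ℝ] ℝ) (i : Fin N) :
    Phi N T i = T (ee i) := rfl

lemma det_eq_matrix_det (T : EuclideanSpace ℝ (Fin N) →L[ℝ] EuclideanSpace ℝ (Fin N)) :
    T.det = (Matrix.of fun i j : Fin N => (T (ee j)) i).det := by
  have : T.det = LinearMap.det (T : EuclideanSpace ℝ (Fin N) →ₗ[ℝ] EuclideanSpace ℝ (Fin N)) := rfl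
  rw [this, ← LinearMap.det_toMatrix (EuclideanSpace.basisFun (Fin N) ℝ).toBasis]
  congr 1

lemma puccMinus_eq_of_nonneg (lam Lam : ℝ) {H : Matrix (Fin N) (Fin N) ℝ}
    (hH : H.IsHermitian) (hnn : ∀ i, 0 ≤ hH.eigenvalues i) :
    puccMinus lam Lam H = lam * ∑ i, hH.eigenvalues i := by
  rw [puccMinus, dif_pos hH, Finset.mul_sum]
  refine Finset.sum_congr rfl fun i _ => ?_
  by_cases h : 0 < hH.eigenvalues i
  · rw [if_pos h]
  · rw [if_neg h]
    have : hH.eigenvalues i = 0 := le_antisymm (not_lt.1 h) (hnn i)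
    rw [this, mul_zero, mul_zero]

lemma detPhiA_bound (lam Lam : ℝ) (hlam : 0 < lam)
    {u : EuclideanSpace ℝ (Fin N) → ℝ} {y : EuclideanSpace ℝ (Fin N)}
    (hsymm : ∀ v w : EuclideanSpace ℝ (Fin N),
      fderiv ℝ (fderiv ℝ u) y v w = fderiv ℝ (fderiv ℝ u) y w v)
    (hpos : ∀ v : EuclideanSpace ℝ (Fin N), 0 ≤ fderiv ℝ (fderiv ℝ u) y v v)
    {K : ℝ} (hK : 0 ≤ K)
    (hsum : puccMinus lam Lam (hessianMat u y) ≤ lam * K) :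
    |((Phi N).comp (fderiv ℝ (fderiv ℝ u) y)).det| ≤ K ^ N := by
  set A := fderiv ℝ (fderiv ℝ u) y with hA
  have hHM : hessianMat u y = Matrix.of fun i j => A (ee i) (ee j) := by
    ext i j
    exact hessianMat_eq u y i j
  have hherm : (hessianMat u y).IsHermitian := by
    apply herm_of_symm
    intro i j
    rw [hessianMat_eq, hessianMat_eq, hsymm]
  have hpsd : (hessianMat u y).PosSemidef := by
    refine Matrix.PosSemidef.of_dotProduct_mulVec_nonneg hherm fun v => ?_
    rw [hHM, quad_dot]
    exact hpos _
  have heig : ∀ i, 0 ≤ hherm.eigenvalues i := hpsd.eigenvalues_nonneg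
  have hsum2 : ∑ i, hherm.eigenvalues i ≤ K := by
    rw [puccMinus_eq_of_nonneg lam Lam hherm heig] at hsum
    exact le_of_mul_le_mul_left (by linarith) hlam
  have heigK : ∀ i, hherm.eigenvalues i ≤ K := by
    intro i
    calc hherm.eigenvalues i ≤ ∑ j, hherm.eigenvalues j :=
          Finset.single_le_sum (fun j _ => heig j) (Finset.mem_univ i)
      _ ≤ K := hsum2
  have hdet : ((Phi N).comp A).det = (hessianMat u y).det := by
    rw [det_eq_matrix_det]
    have : (Matrix.of fun i j : Fin N => (((Phi N).comp A) (ee j)) i)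
        = (hessianMat u y)ᵀ := by
      ext i j
      simp only [Matrix.of_apply, Matrix.transpose_apply, ContinuousLinearMap.comp_apply]
      rw [Phi_apply_coord, hessianMat_eq]
    rw [this, Matrix.det_transpose]
  have hdetprod : (hessianMat u y).det = ∏ i, hherm.eigenvalues i := by
    have := hherm.det_eq_prod_eigenvalues
    simpa using this
  rw [hdet, hdetprod, abs_of_nonneg (Finset.prod_nonneg fun i _ => heig i)]
  calc (∏ i, hherm.eigenvalues i) ≤ ∏ _i : Fin N, K :=
        Finset.prod_le_prod (fun i _ => heig i) (fun i _ => heigK i)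
    _ = K ^ N := by simp

end Aux

set_option maxHeartbeats 1000000 in
/-- maximum principle in domains of small measure for `M⁻_{λ,Λ}`. -/
theorem stmt_9 {N : ℕ} (hN : 1 ≤ N) (lam Lam d b : ℝ)
    (hlam : 0 < lam) (hlL : lam ≤ Lam) (hd : 0 < d) :
    ∃ δ : ℝ, 0 < δ ∧
      ∀ Ω : Set (EuclideanSpace ℝ (Fin N)), IsOpen Ω → Bornology.IsBounded Ω →
        Metric.diam Ω ≤ d → MeasureTheory.volume Ω < ENNReal.ofReal δ →
        ∀ c : EuclideanSpace ℝ (Fin N) → ℝ, (∀ x ∈ Ω, c x ≤ b) →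
        ∀ u : EuclideanSpace ℝ (Fin N) → ℝ, C2Cont Ω u →
          (∀ x ∈ Ω, puccMinus lam Lam (hessianMat u x) + c x * u x ≤ 0) →
          (∀ x ∈ frontier Ω, 0 ≤ u x) →
          ∀ x ∈ Ω, 0 ≤ u x := by
  classical
  haveI : Nontrivial (EuclideanSpace ℝ (Fin N)) := by
    refine ⟨EuclideanSpace.single (⟨0, hN⟩ : Fin N) (1:ℝ), 0, ?_⟩
    intro h
    have := congrArg (fun f : EuclideanSpace ℝ (Fin N) => f (⟨0, hN⟩ : Fin N)) h
    simp [EuclideanSpace.single_apply] at this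
  set B : ℝ := max b 1 with hBdef
  have hB1 : (1:ℝ) ≤ B := le_max_right _ _
  have hB0 : (0:ℝ) < B := lt_of_lt_of_le one_pos hB1
  set ω : ENNReal := MeasureTheory.volume (Metric.ball (0 : EuclideanSpace ℝ (Fin N)) 1) with hωdef
  have hω0 : 0 < ω := Metric.measure_ball_pos _ _ one_pos
  have hωt : ω ≠ ⊤ := MeasureTheory.measure_ball_lt_top.ne
  have hωr : 0 < ω.toReal := ENNReal.toReal_pos hω0.ne' hωt
  refine ⟨ω.toReal * (lam / (2*d*B))^N / 2, by positivity, ?_⟩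
  intro Ω hopen hbdd hdiam hvol c hc u hu hpde hbdry x hx
  by_contra hneg
  push_neg at hneg
  -- compactness and minimum
  have hcomp : IsCompact (closure Ω) := hbdd.isCompact_closure
  have hne : (closure Ω).Nonempty := ⟨x, subset_closure hx⟩
  obtain ⟨z₀, hz₀mem, hz₀min⟩ := hcomp.exists_isMinOn hne hu.2
  set m : ℝ := -u z₀ with hmdef
  have hm : 0 < m := by
    have : u z₀ ≤ u x := hz₀min (subset_closure hx)
    simp only [hmdef, neg_pos]
    linarith
  set r : ℝ := m / (2*d) with hrdef
  have hr : 0 < r := by positivity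
  -- derivatives
  have hdiff : ∀ y ∈ Ω, HasFDerivAt u (fderiv ℝ u y) y := fun y hy =>
    ((hu.1.contDiffAt (hopen.mem_nhds hy)).differentiableAt (by norm_num)).hasFDerivAt
  have hu1 : ContDiffOn ℝ 1 (fderiv ℝ u) Ω := hu.1.fderiv_of_isOpen hopen (by norm_num)
  have hAy : ∀ y ∈ Ω, HasFDerivAt (fderiv ℝ u) (fderiv ℝ (fderiv ℝ u) y) y := fun y hy =>
    ((hu1.contDiffAt (hopen.mem_nhds hy)).differentiableAt (by norm_num)).hasFDerivAt
  set A : EuclideanSpace ℝ (Fin N) →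
      EuclideanSpace ℝ (Fin N) →L[ℝ] EuclideanSpace ℝ (Fin N) →L[ℝ] ℝ :=
    fun y => fderiv ℝ (fderiv ℝ u) y with hAdef
  set g : EuclideanSpace ℝ (Fin N) → EuclideanSpace ℝ (Fin N) :=
    fun y => Phi N (fderiv ℝ u y) with hgdef
  have hg : ∀ y ∈ Ω, HasFDerivAt g ((Phi N).comp (A y)) y := fun y hy =>
    (Phi N).hasFDerivAt.comp y (hAy y hy)
  set Γ : Set (EuclideanSpace ℝ (Fin N)) :=
    {y | y ∈ Ω ∧ u y ≤ 0 ∧ ∀ v, 0 ≤ A y v v} with hΓdef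
  -- symmetry of second derivatives on Ω
  have hsymm : ∀ y ∈ Ω, ∀ v w, A y v w = A y w v := by
    intro y hy v w
    have hev : ∀ᶠ z in nhds y, HasFDerivAt u (fderiv ℝ u z) z := by
      filter_upwards [hopen.eventually_mem hy] with z hz using hdiff z hz
    exact second_derivative_symmetric_of_eventually hev (hAy y hy) v w
  -- measurability of Γ
  have hΓmeas : MeasurableSet Γ := by
    have hAcont : ContinuousOn A Ω := hu1.continuousOn_fderiv_of_isOpen hopen le_rfl
    have hucont : ContinuousOn u Ω := hu.1.continuousOn
    have hO1 : IsOpen (Ω ∩ u ⁻¹' Set.Ioi 0) :=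
      hucont.isOpen_inter_preimage hopen isOpen_Ioi
    have hO2 : IsOpen (⋃ v : EuclideanSpace ℝ (Fin N),
        (Ω ∩ (fun y => A y v v) ⁻¹' Set.Iio 0)) := by
      apply isOpen_iUnion
      intro v
      have hcv : ContinuousOn (fun y => A y v v) Ω :=
        (hAcont.clm_apply continuousOn_const).clm_apply continuousOn_const
      exact hcv.isOpen_inter_preimage hopen isOpen_Iio
    have hΓeq : Γ = Ω \ ((Ω ∩ u ⁻¹' Set.Ioi 0) ∪
        (⋃ v : EuclideanSpace ℝ (Fin N), (Ω ∩ (fun y => A y v v) ⁻¹' Set.Iio 0))) := by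
      ext y
      simp only [hΓdef, Set.mem_setOf_eq, Set.mem_diff, Set.mem_union, Set.mem_inter_iff,
        Set.mem_preimage, Set.mem_Ioi, Set.mem_Iio, Set.mem_iUnion, not_or, not_and,
        not_exists, not_lt]
      tauto
    rw [hΓeq]
    exact hopen.measurableSet.diff (hO1.union hO2).measurableSet
  -- key: ball ⊆ g '' Γ
  have hrd : r * d = m / 2 := by
    rw [hrdef]; field_simp
  have hsub : Metric.ball (0 : EuclideanSpace ℝ (Fin N)) r ⊆ g '' Γ := by
    rintro p hp
    rw [Metric.mem_ball, dist_zero_right] at hp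
    set φ : EuclideanSpace ℝ (Fin N) → ℝ := fun z => u z - innerSL ℝ p z with hφdef
    have hφcont : ContinuousOn φ (closure Ω) :=
      hu.2.sub ((innerSL ℝ p).continuous.continuousOn)
    obtain ⟨yp, hypmem, hypmin⟩ := hcomp.exists_isMinOn hne hφcont
    have hinnerb : ∀ w ∈ closure Ω, ∀ w' ∈ closure Ω,
        (inner ℝ p (w - w') : ℝ) ≤ m / 2 := by
      intro w hw w' hw'
      calc (inner ℝ p (w - w') : ℝ) ≤ ‖p‖ * ‖w - w'‖ := real_inner_le_norm _ _
        _ ≤ r * d := by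
            apply mul_le_mul hp.le ?_ (norm_nonneg _) hr.le
            rw [← dist_eq_norm]
            calc dist w w' ≤ Metric.diam (closure Ω) :=
                  Metric.dist_le_diam_of_mem hbdd.closure hw hw'
              _ = Metric.diam Ω := Metric.diam_closure _
              _ ≤ d := hdiam
        _ = m / 2 := hrd
    have hle0 : φ yp ≤ φ z₀ := hypmin hz₀mem
    have hle : u yp - (inner ℝ p yp : ℝ) ≤ u z₀ - (inner ℝ p z₀ : ℝ) := by
      simpa only [hφdef, innerSL_apply_apply] using hle0
    have hinner_yz : (inner ℝ p yp : ℝ) - (inner ℝ p z₀ : ℝ) ≤ m / 2 := by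
      have := hinnerb yp hypmem z₀ hz₀mem
      rwa [inner_sub_right] at this
    have hupbound : u yp ≤ -(m / 2) := by
      have hz : u z₀ = -m := by rw [hmdef]; ring
      linarith
    have hyΩ : yp ∈ Ω := by
      by_contra hnot
      have hfr : yp ∈ frontier Ω := by
        rw [frontier, hopen.interior_eq]
        exact ⟨hypmem, hnot⟩
      have hupos : 0 ≤ u yp := hbdry yp hfr
      linarith
    have hlocmin : IsLocalMin φ yp :=
      hypmin.isLocalMin (Filter.mem_of_superset (hopen.mem_nhds hyΩ) subset_closure)
    have hφd : HasFDerivAt φ (fderiv ℝ u yp - innerSL ℝ p) yp :=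
      (hdiff yp hyΩ).sub (innerSL ℝ p).hasFDerivAt
    have hgrad : fderiv ℝ u yp = innerSL ℝ p :=
      sub_eq_zero.1 (hlocmin.hasFDerivAt_eq_zero hφd)
    have hgy : g yp = p := by
      rw [hgdef]
      simp only
      rw [hgrad]
      ext i
      rw [Phi_apply_coord, innerSL_apply_apply, EuclideanSpace.inner_single_right]
      simp
    have hφC2 : ContDiffOn ℝ 2 φ Ω :=
      hu.1.sub ((innerSL ℝ p).contDiff.contDiffOn)
    have hfd_eq : fderiv ℝ φ =ᶠ[nhds yp] fun z => fderiv ℝ u z - innerSL ℝ p := by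
      filter_upwards [hopen.eventually_mem hyΩ] with z hz
      exact ((hdiff z hz).sub (innerSL ℝ p).hasFDerivAt).fderiv
    have h2d : fderiv ℝ (fderiv ℝ φ) yp = A yp := by
      rw [hfd_eq.fderiv_eq]
      exact fderiv_sub_const _
    refine ⟨yp, ⟨hyΩ, by linarith, fun v => ?_⟩, hgy⟩
    rw [← h2d]
    exact aux_dir hopen hφC2 hyΩ hlocmin v
  -- det bound on Γ
  have hdetb : ∀ y ∈ Γ, ENNReal.ofReal |((Phi N).comp (A y)).det|
      ≤ ENNReal.ofReal ((B * m / lam) ^ N) := by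
    intro y hy
    apply ENNReal.ofReal_le_ofReal
    apply detPhiA_bound lam Lam hlam (hsymm y hy.1) hy.2.2 (by positivity)
    -- puccMinus ≤ lam * (B*m/lam)
    have h1 : puccMinus lam Lam (hessianMat u y) ≤ -c y * u y := by
      have := hpde y hy.1
      linarith
    have h2 : -c y * u y ≤ B * m := by
      have hu0 : u y ≤ 0 := hy.2.1
      have hum : -m ≤ u y := by
        have : u z₀ ≤ u y := hz₀min (subset_closure hy.1)
        simp only [hmdef]; linarith
      have hcy : c y ≤ B := le_trans (hc y hy.1) (le_max_left _ _)
      nlinarith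
    have h3 : lam * (B * m / lam) = B * m := by field_simp
    calc puccMinus lam Lam (hessianMat u y) ≤ -c y * u y := h1
      _ ≤ B * m := h2
      _ = lam * (B * m / lam) := h3.symm
  -- measure chain
  have h1 : MeasureTheory.volume (Metric.ball (0 : EuclideanSpace ℝ (Fin N)) r)
      ≤ MeasureTheory.volume (g '' Γ) := MeasureTheory.measure_mono hsub
  have h2 : MeasureTheory.volume (g '' Γ)
      ≤ ∫⁻ y in Γ, ENNReal.ofReal |(((Phi N).comp (A y))).det| := by
    exact MeasureTheory.addHaar_image_le_lintegral_abs_det_fderiv MeasureTheory.volume hΓmeas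
      (fun y hy => (hg y hy.1).hasFDerivWithinAt)
  have h3 : (∫⁻ y in Γ, ENNReal.ofReal |(((Phi N).comp (A y))).det|)
      ≤ ENNReal.ofReal ((B * m / lam) ^ N) * MeasureTheory.volume Γ := by
    calc (∫⁻ y in Γ, ENNReal.ofReal |(((Phi N).comp (A y))).det|)
        ≤ ∫⁻ _y in Γ, ENNReal.ofReal ((B * m / lam) ^ N) :=
          MeasureTheory.setLIntegral_mono measurable_const hdetb
      _ = ENNReal.ofReal ((B * m / lam) ^ N) * MeasureTheory.volume Γ :=
          MeasureTheory.setLIntegral_const _ _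
  have h4 : MeasureTheory.volume Γ ≤ MeasureTheory.volume Ω :=
    MeasureTheory.measure_mono (fun y hy => hy.1)
  have hball : MeasureTheory.volume (Metric.ball (0 : EuclideanSpace ℝ (Fin N)) r)
      = ENNReal.ofReal (r ^ N) * ω := by
    have hfr : Module.finrank ℝ (EuclideanSpace ℝ (Fin N)) = N :=
      finrank_euclideanSpace_fin
    rw [MeasureTheory.Measure.addHaar_ball _ _ hr.le, hfr]
  -- final contradiction
  have hchain : ENNReal.ofReal (r ^ N) * ω
      < ENNReal.ofReal ((B * m / lam) ^ N) * ENNReal.ofReal (ω.toReal * (lam / (2*d*B))^N / 2) := by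
    rw [← hball]
    calc MeasureTheory.volume (Metric.ball (0 : EuclideanSpace ℝ (Fin N)) r)
        ≤ ENNReal.ofReal ((B * m / lam) ^ N) * MeasureTheory.volume Γ :=
          le_trans h1 (le_trans h2 h3)
      _ ≤ ENNReal.ofReal ((B * m / lam) ^ N) * MeasureTheory.volume Ω := by
          exact mul_le_mul_right h4 _
      _ < _ := by
          apply ENNReal.mul_lt_mul_right ?_ ?_ hvol
          · exact (ENNReal.ofReal_pos.2 (by positivity)).ne'
          · exact ENNReal.ofReal_ne_top
  rw [← ENNReal.ofReal_toReal hωt, ← ENNReal.ofReal_mul (by positivity),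
    ← ENNReal.ofReal_mul (by positivity)] at hchain
  have hlt := (ENNReal.ofReal_lt_ofReal_iff_of_nonneg (by positivity)).1 hchain
  rw [ENNReal.toReal_ofReal hωr.le] at hlt
  have hKey : (B * m / lam) ^ N * (ω.toReal * (lam / (2*d*B))^N / 2)
      = r ^ N * ω.toReal / 2 := by
    rw [hrdef]
    rw [div_pow, div_pow, div_pow]
    field_simp
    ring
  rw [hKey] at hlt
  nlinarith [pow_pos hr N, hωr]
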